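/- Let X be a nonempty set and Y ⊆ X nonempty. The monoid S̄(X,Y) = {f : X → X : f|_Y ∈ Sym(Y)} is unit-regular (every element is unit-regular) if and only if X \ Y is finite. -/
import Mathlib

open Function Set

/-- An infinite type admits an injective non-surjective self-map. -/
theorem aux_inj_not_surj (α : Type*) [Infinite α] :
    ∃ φ : α → α, Function.Injective φ ∧ ¬ Function.Surjective φ := by
  classical
  let e := Infinite.natEmbedding α
  refine ⟨fun x => if h : ∃ n, e n = x then e (h.choose + 1) else x, ?_, ?_⟩
  · intro x y hxy
    by_cases hx : ∃ n, e n = x <;> by_cases hy : ∃ n, e n = y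
    · simp only [hx, hy, dif_pos] at hxy
      have h1 := e.injective hxy
      rw [← hx.choose_spec, ← hy.choose_spec]
      exact congrArg e (by omega)
    · simp only [hx, hy, dif_pos, dif_neg, not_false_iff] at hxy
      exact absurd (hxy ▸ ⟨_, rfl⟩ : ∃ n, e n = _) hy
    · simp only [hx, hy, dif_pos, dif_neg, not_false_iff] at hxy
      exact absurd ⟨_, hxy.symm⟩ hx
      
    · simpa [hx, hy] using hxy
  · intro hs
    obtain ⟨x, hx⟩ := hs (e 0)
    by_cases h : ∃ n, e n = x
    · simp only [h, dif_pos] at hx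
      have := e.injective hx
      omega
    · simp only [h, dif_neg, not_false_iff] at hx
      exact h ⟨0, hx.symm⟩

theorem stmt_7 {X : Type*} [Nonempty X] (Y : Set X) (hY : Y.Nonempty) :
    (∀ f : X → X, Set.BijOn f Y Y →
        ∃ g : X → X, Function.Bijective g ∧ g '' Y = Y ∧ f ∘ g ∘ f = f)
      ↔ (Yᶜ : Set X).Finite := by
  classical
  constructor
  · -- forward: unit-regular → Yᶜ finite
    intro H
    by_contra hfin
    have hinf : (Yᶜ : Set X).Infinite := hfin
    haveI : Infinite ↥(Yᶜ : Set X) := hinf.to_subtype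
    obtain ⟨φ, hφi, hφs⟩ := aux_inj_not_surj ↥(Yᶜ : Set X)
    set f : X → X := fun x => if h : x ∈ Y then x else ↑(φ ⟨x, h⟩) with hfdef
    have hfY : Set.BijOn f Y Y := by
      refine (Set.bijOn_id Y).congr fun x hx => ?_
      simp [hfdef, hx]
    obtain ⟨g, hgb, hgY, hfg⟩ := H f hfY
    have hgc : ∀ x, x ∉ Y → g x ∉ Y := by
      intro x hx hgx
      rw [← hgY] at hgx
      obtain ⟨y, hy, hxy⟩ := hgx
      exact hx (hgb.1 hxy ▸ hy)
    have hfc : ∀ c : ↥(Yᶜ : Set X), f ↑c = ↑(φ c) := by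
      intro c
      have : (c : X) ∉ Y := c.2
      simp [hfdef, this]
    have key : ∀ c : ↥(Yᶜ : Set X), g ↑(φ c) = ↑c := by
      intro c
      have h1 := congrFun hfg ↑c
      simp only [Function.comp_apply] at h1
      rw [hfc c] at h1
      have h2 : g ↑(φ c) ∉ Y := hgc _ (φ c).2
      have h3 : f (g ↑(φ c)) = ↑(φ ⟨g ↑(φ c), h2⟩) := hfc ⟨g ↑(φ c), h2⟩
      rw [h3] at h1
      have h4 := hφi (Subtype.coe_injective h1)
      exact congrArg Subtype.val h4
    obtain ⟨a, ha⟩ := not_forall.mp hφs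
    have hga : g ↑a ∉ Y := hgc _ a.2
    set c : ↥(Yᶜ : Set X) := ⟨g ↑a, hga⟩ with hc
    have h5 : g ↑(φ c) = g ↑a := key c
    have h6 : (↑(φ c) : X) = ↑a := hgb.1 h5
    exact ha ⟨c, Subtype.coe_injective h6⟩
  · -- backward: Yᶜ finite → unit-regular
    intro hF f hf
    haveI : Fintype ↥(Yᶜ : Set X) := hF.fintype
    let e : ↥Y ≃ ↥Y := hf.equiv f
    have he : ∀ y : ↥Y, (↑(e y) : X) = f ↑y := fun y => rfl
    set p : ↥(Yᶜ : Set X) → Prop := fun z => ∃ x : ↥(Yᶜ : Set X), f ↑x = ↑z with hp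
    set s : {z // p z} → ↥(Yᶜ : Set X) := fun z => z.2.choose with hs
    have hsspec : ∀ z : {z // p z}, f ↑(s z) = ↑z.1 := fun z => z.2.choose_spec
    have hsi : Function.Injective s := by
      intro z1 z2 h
      have e1 := hsspec z1
      have e2 := hsspec z2
      rw [h, e2] at e1
      exact Subtype.ext (Subtype.coe_injective e1.symm)
    let e3 : {z // p z} ≃ {z // z ∈ Set.range s} := Equiv.ofInjective s hsi
    let π : Equiv.Perm ↥(Yᶜ : Set X) := e3.extendSubtype
    have hπ : ∀ (z : ↥(Yᶜ : Set X)) (hz : p z), π z = s ⟨z, hz⟩ := by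
      intro z hz
      have := e3.extendSubtype_apply_of_mem z hz
      rw [this]
      rfl
    set g : X → X := fun x => if h : x ∈ Y then ↑(e.symm ⟨x, h⟩) else ↑(π ⟨x, h⟩)
      with hgdef
    have hgY' : ∀ x (hx : x ∈ Y), g x = ↑(e.symm ⟨x, hx⟩) := fun x hx => dif_pos hx
    have hgC : ∀ x (hx : x ∉ Y), g x = ↑(π ⟨x, hx⟩) := fun x hx => dif_neg hx
    have hginj : Function.Injective g := by
      intro a b hab
      by_cases ha : a ∈ Y <;> by_cases hb : b ∈ Y
      · rw [hgY' a ha, hgY' b hb] at hab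
        have := e.symm.injective (Subtype.coe_injective hab)
        exact congrArg Subtype.val this
      · rw [hgY' a ha, hgC b hb] at hab
        exact absurd (hab ▸ (e.symm ⟨a, ha⟩).2) (π ⟨b, hb⟩).2
      · rw [hgC a ha, hgY' b hb] at hab
        exact absurd (hab ▸ (e.symm ⟨b, hb⟩).2) (π ⟨a, ha⟩).2
      · rw [hgC a ha, hgC b hb] at hab
        have := π.injective (Subtype.coe_injective hab)
        exact congrArg Subtype.val this
    have hgsurjY : ∀ z ∈ Y, ∃ x ∈ Y, g x = z := by
      intro z hz
      refine ⟨↑(e ⟨z, hz⟩), (e ⟨z, hz⟩).2, ?_⟩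
      rw [hgY' _ (e ⟨z, hz⟩).2]
      have : (⟨↑(e ⟨z, hz⟩), (e ⟨z, hz⟩).2⟩ : ↥Y) = e ⟨z, hz⟩ := Subtype.ext rfl
      rw [this, Equiv.symm_apply_apply]
    have hgsurj : Function.Surjective g := by
      intro z
      by_cases hz : z ∈ Y
      · obtain ⟨x, _, hx⟩ := hgsurjY z hz
        exact ⟨x, hx⟩
      · refine ⟨↑(π.symm ⟨z, hz⟩), ?_⟩
        rw [hgC _ (π.symm ⟨z, hz⟩).2]
        have : (⟨↑(π.symm ⟨z, hz⟩), (π.symm ⟨z, hz⟩).2⟩ : ↥(Yᶜ : Set X))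
            = π.symm ⟨z, hz⟩ := Subtype.ext rfl
        rw [this, Equiv.apply_symm_apply]
    refine ⟨g, ⟨hginj, hgsurj⟩, ?_, ?_⟩
    · apply Set.eq_of_subset_of_subset
      · rintro _ ⟨x, hx, rfl⟩
        rw [hgY' x hx]
        exact (e.symm ⟨x, hx⟩).2
      · intro z hz
        obtain ⟨x, hxY, hx⟩ := hgsurjY z hz
        exact ⟨x, hxY, hx⟩
    · funext x
      simp only [Function.comp_apply]
      by_cases hfx : f x ∈ Y
      · rw [hgY' _ hfx]
        have := he (e.symm ⟨f x, hfx⟩)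
        rw [Equiv.apply_symm_apply] at this
        exact this.symm
      · have hx : x ∉ Y := fun hx => hfx (hf.mapsTo hx)
        have hpz : p ⟨f x, hfx⟩ := ⟨⟨x, hx⟩, rfl⟩
        rw [hgC _ hfx, hπ _ hpz]
        exact hsspec ⟨⟨f x, hfx⟩, hpz⟩
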